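/- Conflict generalisation for liveness properties (corrected sub-MC construction of Section 3): let 𝔓 be a family of MCs over finite state type S with parameter type K and initial state s0, let G ⊆ S, λ ∈ ℝ, let r : K → S be a realisation, let B = B_{P_r}(G) be the set of states with no path to G under P_r, and let C ⊆ S with s0 ∈ C. Suppose the (C ∪ B)-restriction of P_r satisfies AProb_{(P_r)_{C∪B}}(s0, B, G) ≥ 1 − λ. Then every realisation r' : K → S with r' k = r k for every parameter k that occurs at some state of C ∪ B satisfies Prob_{P_{r'}}(s0, G) ≤ λ, i.e., D_{r'} violates the liveness property P_{>λ}(◇G). -/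
import Mathlib


open scoped Classical BigOperators

/-- `n`-step reachability probability `Pr_P^n(s, G)`. -/
noncomputable def Pr {S : Type*} [Fintype S] (P : S → S → ℝ) : ℕ → S → Set S → ℝ
  | 0, s, G => if s ∈ G then 1 else 0
  | n + 1, s, G => if s ∈ G then 1 else ∑ t, P s t * Pr P n t G

/-- Reachability probability `Prob_P(s, G) = ⨆ n, Pr_P^n(s, G)`. -/
noncomputable def Prob {S : Type*} [Fintype S] (P : S → S → ℝ) (s : S) (G : Set S) : ℝ :=
  ⨆ n : ℕ, Pr P n s G

/-- `C`-restriction of `P`: states outside `C` are made absorbing. -/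
noncomputable def restrictMC {S : Type*} (C : Set S) (P : S → S → ℝ) (s t : S) : ℝ :=
  if s ∈ C then P s t else (if t = s then 1 else 0)

/-- `n`-step probability of reaching `B` while avoiding `G`. -/
noncomputable def APr {S : Type*} [Fintype S] (P : S → S → ℝ) : ℕ → S → Set S → Set S → ℝ
  | 0, s, B, _ => if s ∈ B then 1 else 0
  | n + 1, s, B, G => if s ∈ B then 1 else if s ∈ G then 0 else ∑ t, P s t * APr P n t B G

/-- `AProb_P(s, B, G) = ⨆ n, APr_P^n(s, B, G)`. -/
noncomputable def AProb {S : Type*} [Fintype S] (P : S → S → ℝ) (s : S) (B G : Set S) : ℝ :=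
  ⨆ n : ℕ, APr P n s B G

/-- `s` has a path to `G` under `P`. -/
def HasPathTo {S : Type*} (P : S → S → ℝ) (s : S) (G : Set S) : Prop :=
  ∃ (m : ℕ) (u : ℕ → S), u 0 = s ∧ (∀ i < m, 0 < P (u i) (u (i + 1))) ∧ u m ∈ G

/-- `B_P(G)`: the set of states with no path to `G` under `P`. -/
def BSet {S : Type*} (P : S → S → ℝ) (G : Set S) : Set S :=
  {s | ¬ HasPathTo P s G}

/-- Transition function `P_r` of the instantiated MC `D_r` of a family `𝔓`. -/
noncomputable def Pinst {S K : Type*} [Fintype K] (𝔓 : S → K → ℝ) (r : K → S) (s t : S) : ℝ :=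
  ∑ k, if r k = t then 𝔓 s k else 0

/-- Parameter `k` occurs at some state of `C`. -/
def OccursIn {S K : Type*} (𝔓 : S → K → ℝ) (C : Set S) (k : K) : Prop :=
  ∃ s ∈ C, 0 < 𝔓 s k

/-- `u` is reachable from `s0` under `P`. -/
def ReachableFrom {S : Type*} (P : S → S → ℝ) (s0 u : S) : Prop :=
  ∃ (m : ℕ) (v : ℕ → S), v 0 = s0 ∧ (∀ i < m, 0 < P (v i) (v (i + 1))) ∧ v m = u

section AuxLemmas

variable {S : Type*} [Fintype S]

lemma Pr_nonneg {P : S → S → ℝ} (hP : ∀ s t, 0 ≤ P s t) :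
    ∀ n s (G : Set S), 0 ≤ Pr P n s G
  | 0, s, G => by simp only [Pr]; split <;> norm_num
  | n + 1, s, G => by
      simp only [Pr]; split
      · norm_num
      · exact Finset.sum_nonneg fun t _ => mul_nonneg (hP s t) (Pr_nonneg hP n t G)

lemma Pr_le_one {P : S → S → ℝ} (hP : ∀ s t, 0 ≤ P s t)
    (hP1 : ∀ s, ∑ t, P s t = 1) :
    ∀ n s (G : Set S), Pr P n s G ≤ 1
  | 0, s, G => by simp only [Pr]; split <;> norm_num
  | n + 1, s, G => by
      simp only [Pr]; split
      · norm_num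
      · calc ∑ t, P s t * Pr P n t G ≤ ∑ t, P s t * 1 :=
              Finset.sum_le_sum fun t _ =>
                mul_le_mul_of_nonneg_left (Pr_le_one hP hP1 n t G) (hP s t)
          _ = 1 := by simp [hP1 s]

lemma Pr_le_succ {P : S → S → ℝ} (hP : ∀ s t, 0 ≤ P s t) :
    ∀ n s (G : Set S), Pr P n s G ≤ Pr P (n + 1) s G
  | 0, s, G => by
      simp only [Pr]; split
      · norm_num
      · exact Finset.sum_nonneg fun t _ => mul_nonneg (hP s t) (Pr_nonneg hP 0 t G)
  | n + 1, s, G => by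
      simp only [Pr]; split
      · norm_num
      · exact Finset.sum_le_sum fun t _ =>
          mul_le_mul_of_nonneg_left (Pr_le_succ hP n t G) (hP s t)

lemma Pr_mono {P : S → S → ℝ} (hP : ∀ s t, 0 ≤ P s t) (s : S) (G : Set S) :
    Monotone fun n => Pr P n s G :=
  monotone_nat_of_le_succ fun n => Pr_le_succ hP n s G

lemma APr_nonneg {P : S → S → ℝ} (hP : ∀ s t, 0 ≤ P s t) :
    ∀ n s (B G : Set S), 0 ≤ APr P n s B G
  | 0, s, B, G => by simp only [APr]; split <;> norm_num
  | n + 1, s, B, G => by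
      simp only [APr]; split
      · norm_num
      split
      · norm_num
      · exact Finset.sum_nonneg fun t _ => mul_nonneg (hP s t) (APr_nonneg hP n t B G)

lemma APr_le_succ {P : S → S → ℝ} (hP : ∀ s t, 0 ≤ P s t) :
    ∀ n s (B G : Set S), APr P n s B G ≤ APr P (n + 1) s B G
  | 0, s, B, G => by
      simp only [APr]; split
      · norm_num
      split
      · norm_num
      · exact Finset.sum_nonneg fun t _ => mul_nonneg (hP s t) (APr_nonneg hP 0 t B G)
  | n + 1, s, B, G => by
      simp only [APr]; split
      · norm_num
      split
      · norm_num
      · exact Finset.sum_le_sum fun t _ =>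
          mul_le_mul_of_nonneg_left (APr_le_succ hP n t B G) (hP s t)

lemma APr_mono {P : S → S → ℝ} (hP : ∀ s t, 0 ≤ P s t) (s : S) (B G : Set S) :
    Monotone fun n => APr P n s B G :=
  monotone_nat_of_le_succ fun n => APr_le_succ hP n s B G

/-- Outside `D`, an MC that is absorbing outside `D` keeps `APr` at 0
(when `B ⊆ D`). -/
lemma APr_absorbing {Q : S → S → ℝ} {B G D : Set S} (hBD : B ⊆ D)
    (hQout : ∀ s, s ∉ D → ∀ t, Q s t = if t = s then 1 else 0) :
    ∀ n s, s ∉ D → APr Q n s B G = 0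
  | 0, s, hs => by
      have hsB : s ∉ B := fun h => hs (hBD h)
      simp [APr, hsB]
  | n + 1, s, hs => by
      have hsB : s ∉ B := fun h => hs (hBD h)
      simp only [APr, if_neg hsB]
      split
      · rfl
      · have : ∀ t, Q s t * APr Q n t B G =
            (if t = s then 1 else 0) * APr Q n t B G := fun t => by
          rw [hQout s hs t]
        rw [Finset.sum_congr rfl fun t _ => this t]
        simp only [ite_mul, one_mul, zero_mul]
        rw [Finset.sum_ite_eq' Finset.univ s (fun t => APr Q n t B G)]
        simp [APr_absorbing hBD hQout n s hs]

/-- From a state of the closed set `B` disjoint from `G`, `Pr` is 0. -/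
lemma Pr_zero_of_B {R : S → S → ℝ} {B G : Set S}
    (hBG : ∀ s, s ∈ B → s ∉ G)
    (hcl : ∀ s, s ∈ B → ∀ t, R s t ≠ 0 → t ∈ B) :
    ∀ n s, s ∈ B → Pr R n s G = 0
  | 0, s, hs => by simp [Pr, hBG s hs]
  | n + 1, s, hs => by
      simp only [Pr, if_neg (hBG s hs)]
      refine Finset.sum_eq_zero fun t _ => ?_
      by_cases h : R s t = 0
      · simp [h]
      · rw [Pr_zero_of_B hBG hcl n t (hcl s hs t h), mul_zero]

/-- The key inequality: `Pr` for the modified chain plus `APr` for the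
restricted chain never exceeds 1. -/
lemma main_ineq {P Q : S → S → ℝ} {B G D : Set S}
    (hP0 : ∀ s t, 0 ≤ P s t) (hP1 : ∀ s, ∑ t, P s t = 1)
    (hBG : ∀ s, s ∈ B → s ∉ G)
    (hBD : B ⊆ D)
    (hQP : ∀ s, s ∈ D → ∀ t, Q s t = P s t)
    (hQout : ∀ s, s ∉ D → ∀ t, Q s t = if t = s then 1 else 0)
    (hPrB : ∀ n s, s ∈ B → Pr P n s G = 0) :
    ∀ n s, Pr P n s G + APr Q n s B G ≤ 1
  | 0, s => by
      by_cases hsG : s ∈ G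
      · have hsB : s ∉ B := fun h => hBG s h hsG
        simp [Pr, APr, hsG, hsB]
      · simp only [Pr, APr, if_neg hsG]
        split <;> norm_num
  | n + 1, s => by
      by_cases hsB : s ∈ B
      · rw [hPrB (n + 1) s hsB]
        simp [APr, hsB]
      by_cases hsG : s ∈ G
      · simp [Pr, APr, hsG, hsB]
      by_cases hsD : s ∈ D
      · simp only [Pr, APr, if_neg hsG, if_neg hsB]
        have hQ : ∀ t, Q s t * APr Q n t B G = P s t * APr Q n t B G := fun t => by
          rw [hQP s hsD t]
        rw [Finset.sum_congr rfl fun t _ => hQ t, ← Finset.sum_add_distrib]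
        calc ∑ t, (P s t * Pr P n t G + P s t * APr Q n t B G)
            = ∑ t, P s t * (Pr P n t G + APr Q n t B G) := by
              refine Finset.sum_congr rfl fun t _ => ?_; ring
          _ ≤ ∑ t, P s t * 1 :=
              Finset.sum_le_sum fun t _ =>
                mul_le_mul_of_nonneg_left (main_ineq hP0 hP1 hBG hBD hQP hQout hPrB n t)
                  (hP0 s t)
          _ = 1 := by simp [hP1 s]
      · rw [APr_absorbing hBD hQout (n + 1) s hsD, add_zero]
        exact Pr_le_one hP0 hP1 (n + 1) s G

lemma Pinst_nonneg {K : Type*} [Fintype K] (𝔓 : S → K → ℝ)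
    (h0 : ∀ s k, 0 ≤ 𝔓 s k) (r : K → S) (s t : S) : 0 ≤ Pinst 𝔓 r s t :=
  Finset.sum_nonneg fun k _ => by
    split
    · exact h0 s k
    · exact le_refl 0

lemma Pinst_row {K : Type*} [Fintype K] (𝔓 : S → K → ℝ)
    (h1 : ∀ s, ∑ k, 𝔓 s k = 1) (r : K → S) (s : S) : ∑ t, Pinst 𝔓 r s t = 1 := by
  unfold Pinst
  rw [Finset.sum_comm]
  have : ∀ k : _, ∑ t, (if r k = t then 𝔓 s k else 0) = 𝔓 s k := fun k => by
    rw [Finset.sum_ite_eq Finset.univ (r k) (fun _ => 𝔓 s k)]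
    simp
  rw [Finset.sum_congr rfl fun k _ => this k, h1 s]

lemma Pinst_eq_of_agree {K : Type*} [Fintype K] (𝔓 : S → K → ℝ)
    (h0 : ∀ s k, 0 ≤ 𝔓 s k) (D : Set S) (r r' : K → S)
    (hr : ∀ k, OccursIn 𝔓 D k → r' k = r k) {s : S} (hs : s ∈ D) (t : S) :
    Pinst 𝔓 r' s t = Pinst 𝔓 r s t := by
  unfold Pinst
  refine Finset.sum_congr rfl fun k _ => ?_
  rcases lt_or_eq_of_le (h0 s k) with h | h
  · rw [hr k ⟨s, hs, h⟩]
  · simp [← h]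

lemma BSet_closed {P : S → S → ℝ} {G : Set S} {s t : S}
    (hs : s ∈ BSet P G) (hst : 0 < P s t) : t ∈ BSet P G := by
  intro ht
  obtain ⟨m, u, hu0, hstep, hend⟩ := ht
  refine hs ⟨m + 1, fun i => if i = 0 then s else u (i - 1), by simp, ?_, ?_⟩
  · intro i hi
    rcases Nat.eq_zero_or_pos i with h | h
    · subst h; simpa [hu0] using hst
    · have h1 : i ≠ 0 := h.ne'
      have h2 : i + 1 ≠ 0 := by omega
      simp only [if_neg h1, if_neg h2]
      have : i - 1 < m := by omega
      have := hstep (i - 1) this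
      have harith : i - 1 + 1 = i + 1 - 1 := by omega
      rwa [harith] at this
  · simp [Nat.succ_ne_zero]; exact hend

lemma BSet_not_G {P : S → S → ℝ} {G : Set S} {s : S}
    (hs : s ∈ BSet P G) : s ∉ G := fun h =>
  hs ⟨0, fun _ => s, rfl, fun i hi => absurd hi (Nat.not_lt_zero i), h⟩

end AuxLemmas

/-- conflict generalisation for liveness properties
(corrected sub-MC construction). -/
theorem stmt_16 {S K : Type*} [Fintype S] [Nonempty S] [Fintype K]
    (𝔓 : S → K → ℝ) (h𝔓0 : ∀ s k, 0 ≤ 𝔓 s k) (h𝔓1 : ∀ s, ∑ k, 𝔓 s k = 1)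
    (s0 : S) (G : Set S) (lam : ℝ) (r : K → S)
    (B : Set S) (hB : B = BSet (Pinst 𝔓 r) G)
    (C : Set S) (hs0 : s0 ∈ C)
    (hcrit : AProb (restrictMC (C ∪ B) (Pinst 𝔓 r)) s0 B G ≥ 1 - lam) :
    ∀ r' : K → S, (∀ k, OccursIn 𝔓 (C ∪ B) k → r' k = r k) →
      Prob (Pinst 𝔓 r') s0 G ≤ lam := by
  intro r' hr'
  set P : S → S → ℝ := Pinst 𝔓 r with hP
  set P' : S → S → ℝ := Pinst 𝔓 r' with hP'
  set D : Set S := C ∪ B with hD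
  set Q : S → S → ℝ := restrictMC D P with hQ
  have hP0 : ∀ s t, 0 ≤ P s t := Pinst_nonneg 𝔓 h𝔓0 r
  have hP'0 : ∀ s t, 0 ≤ P' s t := Pinst_nonneg 𝔓 h𝔓0 r'
  have hP'1 : ∀ s, ∑ t, P' s t = 1 := Pinst_row 𝔓 h𝔓1 r'
  have hP'P : ∀ s ∈ D, ∀ t, P' s t = P s t := fun s hs t =>
    Pinst_eq_of_agree 𝔓 h𝔓0 D r r' hr' hs t
  have hBD : B ⊆ D := Set.subset_union_right
  have hBG : ∀ s, s ∈ B → s ∉ G := fun s hs => BSet_not_G (hB ▸ hs)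
  have hcl : ∀ s, s ∈ B → ∀ t, P' s t ≠ 0 → t ∈ B := by
    intro s hs t hne
    rw [hP'P s (hBD hs) t] at hne
    have : 0 < P s t := lt_of_le_of_ne (hP0 s t) (Ne.symm hne)
    rw [hB] at hs ⊢
    exact BSet_closed hs this
  have hQP : ∀ s, s ∈ D → ∀ t, Q s t = P' s t := fun s hs t => by
    rw [hQ, restrictMC, if_pos hs, hP'P s hs t]
  have hQout : ∀ s, s ∉ D → ∀ t, Q s t = if t = s then 1 else 0 := fun s hs t => by
    rw [hQ, restrictMC, if_neg hs]
  have hQ0 : ∀ s t, 0 ≤ Q s t := fun s t => by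
    rw [hQ, restrictMC]
    split
    · exact hP0 s t
    · split <;> norm_num
  have hPrB : ∀ n s, s ∈ B → Pr P' n s G = 0 := Pr_zero_of_B hBG hcl
  have hmain : ∀ n s, Pr P' n s G + APr Q n s B G ≤ 1 :=
    main_ineq hP'0 hP'1 hBG hBD hQP hQout hPrB
  have hcrit' : (1 : ℝ) - lam ≤ ⨆ m, APr Q m s0 B G := by
    have : AProb Q s0 B G ≥ 1 - lam := hcrit
    rwa [AProb] at this
  rw [Prob]
  refine ciSup_le fun n => ?_
  have hA : (⨆ m, APr Q m s0 B G) ≤ 1 - Pr P' n s0 G := by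
    refine ciSup_le fun m => ?_
    have h1 : APr Q m s0 B G ≤ APr Q (max n m) s0 B G :=
      APr_mono hQ0 s0 B G (le_max_right n m)
    have h2 : Pr P' n s0 G ≤ Pr P' (max n m) s0 G :=
      Pr_mono hP'0 s0 G (le_max_left n m)
    have h3 := hmain (max n m) s0
    linarith
  linarith
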